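/- If a tree T is not accepted by A_{▷E}, then there exists a blocking pair (F,g) for T such that for every minimal accepting execution tree of A_{▷F} on T with induced unitary marking ν of the root's successors, every successor y with ν(y) = q⊤ has its subtree T_y rejected by A_{g'} for every g' ∈ F ⊎ {g}. -/

import Mathlib

/-- A `Σ`-labelled tree of arbitrary (finite) arity over direction set `D`:
a prefix-closed set of nodes (words over `D`) containing the root, with a labelling. -/
structure STree (D : Type) (A : Type) where
  nodes : Set (List D)
  root_mem : ([] : List D) ∈ nodes
  prefix_closed : ∀ n d, n ++ [d] ∈ nodes → n ∈ nodes
  label : List D → A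

/-- Positive Boolean combinations over atoms `α`. -/
inductive PBF (α : Type) : Type
  | tru : PBF α
  | fls : PBF α
  | atom : α → PBF α
  | and : PBF α → PBF α → PBF α
  | or : PBF α → PBF α → PBF α

def PBF.map {α β : Type} (f : α → β) : PBF α → PBF β
  | .tru => .tru
  | .fls => .fls
  | .atom a => .atom (f a)
  | .and φ ψ => .and (φ.map f) (ψ.map f)
  | .or φ ψ => .or (φ.map f) (ψ.map f)

/-- An EU-pair over state set `Q`: a multiset `E` of states and a set `U` of states. -/
abbrev EUPair (Q : Type) := Multiset Q × Set Q

def EUPair.map {Q Q' : Type} (f : Q → Q') (p : EUPair Q) : EUPair Q' :=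
  (p.1.map f, f '' p.2)

/-- The marking `ν` of the `children` satisfies the EU-pair `p` (relation `⊨⁺`):
some unitary submarking `f` of `ν` matches the existential part `p.1` on a family
`m` of pairwise distinct children and maps every other child into `p.2`. -/
def SatEU {D Q : Type} (children : Set D) (ν : D → Set Q) (p : EUPair Q) : Prop :=
  ∃ f : D → Q, (∀ d ∈ children, f d ∈ ν d) ∧
    ∃ m : Multiset D, m.Nodup ∧ (∀ d ∈ m, d ∈ children) ∧
      m.map f = p.1 ∧ ∀ d ∈ children, d ∉ m → f d ∈ p.2

/-- `⊨⁺` extended to positive Boolean combinations of EU-pairs. -/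
def SatPBF {D Q : Type} (children : Set D) (ν : D → Set Q) : PBF (EUPair Q) → Prop
  | .tru => True
  | .fls => False
  | .atom p => SatEU children ν p
  | .and φ ψ => SatPBF children ν φ ∧ SatPBF children ν ψ
  | .or φ ψ => SatPBF children ν φ ∨ SatPBF children ν ψ

/-- Alternating EU parity tree automaton over alphabet `A`. -/
structure APTA (A : Type) where
  Q : Type
  init : Q
  δ : Q → A → PBF (EUPair Q)
  ω : Q → ℕ

/-- Parity acceptance for an infinite sequence of priorities: the least priority
occurring infinitely often is even. -/
def ParitySeq (s : ℕ → ℕ) : Prop :=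
  Even (sInf {c | {k | s k = c}.Infinite})

namespace APTA

variable {A D : Type}

/-- The automaton state attached to a node of an execution tree. -/
def stateOf (M : APTA A) (e : List (D × M.Q)) : M.Q :=
  match e.getLast? with
  | none => M.init
  | some p => p.2

/-- `et` is an execution tree of `M` over the input tree `T`: a prefix-closed set of
words over `D × Q`, rooted at `[]` (in state `init`), projecting into `T`,
whose induced markings satisfy the transition function everywhere. -/
def IsExecTree (M : APTA A) (T : STree D A) (et : Set (List (D × M.Q))) : Prop :=
  ([] ∈ et) ∧ (∀ e p, e ++ [p] ∈ et → e ∈ et) ∧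
  (∀ e ∈ et, e.map Prod.fst ∈ T.nodes) ∧
  (∀ e ∈ et,
    SatPBF {d | (e.map Prod.fst) ++ [d] ∈ T.nodes}
      (fun d => {q | e ++ [(d, q)] ∈ et})
      (M.δ (M.stateOf e) (T.label (e.map Prod.fst))))

/-- `T` is accepted by `M`: some execution tree all of whose infinite branches
satisfy the parity condition. (Finite branches are accepting.) -/
def Accepts (M : APTA A) (T : STree D A) : Prop :=
  ∃ et : Set (List (D × M.Q)), M.IsExecTree T et ∧
    ∀ b : ℕ → D × M.Q, (∀ k, (List.range k).map b ∈ et) →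
      ParitySeq (fun k => M.ω (b k).2)

/-- The automaton `M` with initial state replaced by `q`. -/
def withInit (M : APTA A) (q : M.Q) : APTA A := { M with init := q }

end APTA

/-- The subtree of `T` rooted at node `n0`. -/
def STree.subAt {D A : Type} (T : STree D A) (n0 : List D) (h : n0 ∈ T.nodes) :
    STree D A where
  nodes := {m | n0 ++ m ∈ T.nodes}
  root_mem := by simpa using h
  prefix_closed := by
    intro n d hm
    have hm' : (n0 ++ n) ++ [d] ∈ T.nodes := by
      simpa [List.append_assoc] using hm
    exact T.prefix_closed (n0 ++ n) d hm'
  label := fun m => T.label (n0 ++ m)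

/-- The subtree of `T` rooted at the successor `d` of the root is accepted by `M`
started in state `q` (false when `d` is not a successor of the root). -/
def AccChild {A D : Type} (M : APTA A) (q : M.Q) (T : STree D A) (d : D) : Prop :=
  ∃ h : [d] ∈ T.nodes, (M.withInit q).Accepts (T.subAt [d] h)

/-- The automaton `A_{▷E}`: a fresh initial state whose transition (on every letter)
is the EU-pair `⟨E;{q⊤}⟩`, the rest of `M` unchanged. -/
def arrow {A : Type} (M : APTA A) (qT : M.Q) (E : Multiset M.Q) : APTA A where
  Q := Option M.Q
  init := none
  δ := fun q a =>
    match q with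
    | none => PBF.atom (E.map some, ({some qT} : Set (Option M.Q)))
    | some q => (M.δ q a).map (EUPair.map some)
  ω := fun q =>
    match q with
    | none => 0
    | some q => M.ω q

/-- The automaton `A_{▷⟨E;U⟩}`: fresh initial state with transition `⟨E;U⟩`. -/
def arrowEU {A : Type} (M : APTA A) (E : Multiset M.Q) (U : Set M.Q) : APTA A where
  Q := Option M.Q
  init := none
  δ := fun q a =>
    match q with
    | none => PBF.atom (E.map some, some '' U)
    | some q => (M.δ q a).map (EUPair.map some)
  ω := fun q =>
    match q with
    | none => 0
    | some q => M.ω q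

/-- A witness (minimal accepting execution tree, restricted to the root level) for
`A_{▷F}` on `T`: pairwise-distinct successors of the root matched with the states
of `F`, each accepting the corresponding subtree. -/
def Witness {A D : Type} (M : APTA A) (T : STree D A) (F : Multiset M.Q)
    (m : Multiset (D × M.Q)) : Prop :=
  (m.map Prod.fst).Nodup ∧ m.map Prod.snd = F ∧ ∀ p ∈ m, AccChild M p.2 T p.1


section Comb
variable {D Q : Type}

def Mch (R : D → Q → Prop) (G : Multiset Q) : Prop :=
  ∃ m : Multiset (D × Q), (m.map Prod.fst).Nodup ∧ m.map Prod.snd = G ∧ ∀ p ∈ m, R p.1 p.2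

lemma mch_add_infinite (R : D → Q → Prop) (I : Multiset Q)
    (hI : ∀ q ∈ I, {y | R y q}.Infinite) {G : Multiset Q} (hG : Mch R G) :
    Mch R (G + I) := by
  classical
  induction I using Multiset.induction generalizing G with
  | empty => simpa using hG
  | cons q I ih =>
    have hq : {y | R y q}.Infinite := hI q (Multiset.mem_cons_self _ _)
    obtain ⟨m, hnd, hsnd, hR⟩ := hG
    obtain ⟨y, hy, hynot⟩ := hq.exists_notMem_finset (m.map Prod.fst).toFinset
    have hG' : Mch R (G + {q}) := by
      refine ⟨(y, q) ::ₘ m, ?_, ?_, ?_⟩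
      · simp only [Multiset.map_cons]
        exact Multiset.nodup_cons.mpr ⟨by simpa using hynot, hnd⟩
      · simp only [Multiset.map_cons, hsnd]
        rw [add_comm, Multiset.singleton_add]
      · intro p hp
        rcases Multiset.mem_cons.mp hp with h | h
        · subst h; exact hy
        · exact hR p h
    have := ih (fun q' hq' => hI q' (Multiset.mem_cons_of_mem hq')) hG'
    have heq : G + {q} + I = G + q ::ₘ I := by
      rw [← Multiset.singleton_add q I, ← add_assoc]
    rwa [heq] at this

lemma sum_count_eq_card_filter [DecidableEq Q] (s : Multiset Q) (B : Finset Q) :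
    ∑ q ∈ B, s.count q = Multiset.card (s.filter (· ∈ B)) := by
  induction s using Multiset.induction with
  | empty => simp
  | cons a s ih =>
    rw [Multiset.filter_cons]
    simp only [Multiset.count_cons, Finset.sum_add_distrib, ih, Multiset.card_add]
    rw [Finset.sum_ite_eq' B a (fun _ => 1)]
    by_cases h : a ∈ B <;> simp [h, add_comm]

lemma coe_eq_map_get (l : List Q) :
    (↑l : Multiset Q) = (↑(List.finRange l.length) : Multiset (Fin l.length)).map l.get := by
  rw [Multiset.map_coe]
  exact congrArg (fun x : List Q => (x : Multiset Q)) (List.map_get_finRange l).symm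

lemma count_coe_finRange (n : ℕ) (i : Fin n) :
    Multiset.count i (↑(List.finRange n) : Multiset (Fin n)) = 1 :=
  Multiset.count_eq_one_of_mem (by exact_mod_cast List.nodup_finRange n)
    (by exact_mod_cast List.mem_finRange i)

lemma nodup_le_finRange {n : ℕ} (s : Multiset (Fin n)) (hs : s.Nodup) :
    s ≤ (↑(List.finRange n) : Multiset (Fin n)) := by
  classical
  rw [Multiset.le_iff_count]
  intro i
  rw [count_coe_finRange]
  exact (Multiset.nodup_iff_count_le_one.mp hs) i

lemma nodup_map_get_le (l : List Q) (s : Multiset (Fin l.length)) (hs : s.Nodup) :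
    s.map l.get ≤ (↑l : Multiset Q) := by
  rw [coe_eq_map_get l]
  exact Multiset.map_le_map (nodup_le_finRange s hs)

end Comb

section Comb2
variable {D Q : Type}

def NSet (R : D → Q → Prop) (A : Finset Q) : Set D := {y | ∃ q ∈ A, R y q}

def Viol [DecidableEq Q] (R : D → Q → Prop) (E : Multiset Q) (A : Finset Q) : Prop :=
  (NSet R A).Finite ∧ (∀ q ∈ A, {y | R y q}.Finite) ∧
    (NSet R A).ncard < ∑ q ∈ A, E.count q

theorem comb_main [DecidableEq Q] (R : D → Q → Prop) {E : Multiset Q} (hE : ¬ Mch R E) :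
    ∃ F, F ≤ E ∧ Mch R F ∧ ∃ g, g ∈ E - F ∧ ∀ q ∈ F + {g}, ¬ Mch R (F + {q}) := by
  classical
  -- reduce to the part of `E` with finite neighborhoods
  have hMfin : ¬ Mch R (E.filter (fun q => {y | R y q}.Finite)) := by
    intro hm
    apply hE
    have h2 := mch_add_infinite R (E.filter (fun q => ¬ {y | R y q}.Finite))
      (fun q hq => (Multiset.mem_filter.mp hq).2) hm
    rwa [Multiset.filter_add_not] at h2
  set Efin : Multiset Q := E.filter (fun q => {y | R y q}.Finite) with hEfin_def
  set lE := Efin.toList with hlE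
  have hlE_coe : (↑lE : Multiset Q) = Efin := Multiset.coe_toList Efin
  have hlmem : ∀ i : Fin lE.length, {y | R y (lE.get i)}.Finite := by
    intro i
    have h1 : lE.get i ∈ Efin := by
      rw [← hlE_coe]; exact Multiset.mem_coe.mpr (lE.get_mem i)
    exact (Multiset.mem_filter.mp h1).2
  -- a violating set exists, by Hall's theorem
  obtain ⟨s0, hs0⟩ : ∃ s0 : Finset (Fin lE.length),
      ((s0.biUnion fun i => (hlmem i).toFinset).card < s0.card) := by
    by_contra hc
    push_neg at hc
    obtain ⟨f, hfinj, hft⟩ := (Finset.all_card_le_biUnion_card_iff_exists_injective _).mp hc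
    apply hMfin
    refine ⟨(↑(List.ofFn fun i => (f i, lE.get i)) : Multiset (D × Q)), ?_, ?_, ?_⟩
    · rw [Multiset.map_coe, List.map_ofFn]
      exact_mod_cast List.nodup_ofFn.mpr (show Function.Injective (fun i => f i) from hfinj)
    · rw [Multiset.map_coe, List.map_ofFn]
      show (↑(List.ofFn fun i => lE.get i) : Multiset Q) = _
      rw [List.ofFn_get, hlE_coe]
    · intro p hp
      have : p ∈ List.ofFn fun i => (f i, lE.get i) := by exact_mod_cast hp
      obtain ⟨i, hi⟩ := List.mem_ofFn.mp this
      subst hi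
      exact (hlmem i).mem_toFinset.mp (hft i)
  have hA0 : Viol R E (s0.image lE.get) := by
    have hset : NSet R (s0.image lE.get) = ↑(s0.biUnion fun i => (hlmem i).toFinset) := by
      ext y
      simp only [NSet, Set.mem_setOf_eq, Finset.coe_biUnion, Set.mem_iUnion, Finset.mem_coe,
        Finset.mem_biUnion, Finset.mem_image, Set.Finite.mem_toFinset, Set.mem_setOf_eq]
      constructor
      · rintro ⟨q, ⟨i, his, rfl⟩, hR⟩; exact ⟨i, his, hR⟩
      · rintro ⟨i, his, hR⟩; exact ⟨lE.get i, ⟨i, his, rfl⟩, hR⟩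
    refine ⟨?_, ?_, ?_⟩
    · rw [hset]; exact Finset.finite_toSet _
    · rintro q hq
      obtain ⟨i, _, rfl⟩ := Finset.mem_image.mp hq
      exact hlmem i
    · rw [hset, Set.ncard_coe_finset]
      calc (s0.biUnion fun i => (hlmem i).toFinset).card < s0.card := hs0
        _ = Multiset.card (s0.val.map lE.get) := by rw [Multiset.card_map]; rfl
        _ ≤ Multiset.card (Efin.filter (· ∈ s0.image lE.get)) := by
            apply Multiset.card_le_card
            refine Multiset.le_filter.mpr ⟨?_, ?_⟩
            · rw [← hlE_coe]; exact nodup_map_get_le lE s0.val s0.nodup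
            · intro q hq
              obtain ⟨i, hi, rfl⟩ := Multiset.mem_map.mp hq
              exact Finset.mem_image.mpr ⟨i, hi, rfl⟩
        _ = ∑ q ∈ s0.image lE.get, Efin.count q := (sum_count_eq_card_filter _ _).symm
        _ ≤ ∑ q ∈ s0.image lE.get, E.count q :=
            Finset.sum_le_sum fun q _ => Multiset.count_le_of_le q (Multiset.filter_le _ _)
  -- take a minimal violating set
  have hne : {n | ∃ A, Viol R E A ∧ A.card = n}.Nonempty := ⟨_, _, hA0, rfl⟩
  obtain ⟨A, hA, hAcard⟩ := Nat.sInf_mem hne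
  have hmin : ∀ A', Viol R E A' → A.card ≤ A'.card := by
    intro A' h
    rw [hAcard]
    exact Nat.sInf_le ⟨A', h, rfl⟩
  obtain ⟨hNSfin, hAfin, hAlt⟩ := hA
  set NF : Finset D := hNSfin.toFinset with hNF
  set lA := (E.filter (· ∈ A)).toList with hlA
  have hlA_coe : (↑lA : Multiset Q) = E.filter (· ∈ A) := Multiset.coe_toList _
  have hlA_mem : ∀ i : Fin lA.length, lA.get i ∈ A := by
    intro i
    have h1 : lA.get i ∈ E.filter (· ∈ A) := by rw [← hlA_coe]; exact Multiset.mem_coe.mpr (lA.get_mem i)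
    exact (Multiset.mem_filter.mp h1).2
  have hcount_lA : ∀ q ∈ A, (↑lA : Multiset Q).count q = E.count q := by
    intro q hq; rw [hlA_coe, Multiset.count_filter, if_pos hq]
  set t' : {y // y ∈ NF} → Finset (Fin lA.length) :=
    fun y => Finset.univ.filter (fun i => R y.1 (lA.get i)) with ht'
  -- Hall's condition for matching the neighborhood `NF` into (copies of) states of `A`
  have hallR : ∀ S : Finset {y // y ∈ NF}, S.card ≤ (S.biUnion t').card := by
    by_contra hc
    push_neg at hc
    obtain ⟨S, hS⟩ := hc
    set AS : Finset Q := A.filter (fun q => ∃ y ∈ S, R y.1 q) with hAS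
    have hASsub : AS ⊆ A := Finset.filter_subset _ _
    have hASne : AS.Nonempty := by
      have hSne : S.Nonempty := Finset.card_pos.mp (lt_of_le_of_lt (Nat.zero_le _) hS)
      obtain ⟨y, hy⟩ := hSne
      have hyNS : (y : D) ∈ NSet R A := hNSfin.mem_toFinset.mp y.2
      obtain ⟨q, hqA, hRq⟩ := hyNS
      exact ⟨q, Finset.mem_filter.mpr ⟨hqA, y, hy, hRq⟩⟩
    have hle : (↑lA : Multiset Q).filter (· ∈ AS) ≤ (S.biUnion t').val.map lA.get := by
      rw [Multiset.le_iff_count]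
      intro q
      rw [Multiset.count_filter]
      split_ifs with hqAS
      · rw [coe_eq_map_get lA, Multiset.count_map, Multiset.count_map]
        apply Multiset.card_le_card
        rw [Multiset.le_iff_count]
        intro i
        rw [Multiset.count_filter, Multiset.count_filter]
        split_ifs with hqi
        · have hib : i ∈ S.biUnion t' := by
            obtain ⟨y, hyS, hRyq⟩ := (Finset.mem_filter.mp hqAS).2
            exact Finset.mem_biUnion.mpr
              ⟨y, hyS, Finset.mem_filter.mpr ⟨Finset.mem_univ _, hqi ▸ hRyq⟩⟩
          rw [count_coe_finRange, Multiset.count_eq_one_of_mem (S.biUnion t').nodup hib]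
        · exact Nat.zero_le _
      · exact Nat.zero_le _
    have h1 : ∑ q ∈ AS, E.count q ≤ (S.biUnion t').card := by
      calc ∑ q ∈ AS, E.count q = ∑ q ∈ AS, (↑lA : Multiset Q).count q :=
            Finset.sum_congr rfl (fun q hq => (hcount_lA q (hASsub hq)).symm)
        _ = Multiset.card ((↑lA : Multiset Q).filter (· ∈ AS)) := sum_count_eq_card_filter _ _
        _ ≤ Multiset.card ((S.biUnion t').val.map lA.get) := Multiset.card_le_card hle
        _ = (S.biUnion t').card := by rw [Multiset.card_map]; rfl
    set A' : Finset Q := A \ AS with hA'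
    set SD : Finset D := S.image Subtype.val with hSD
    have hSDcard : SD.card = S.card := Finset.card_image_of_injective _ Subtype.val_injective
    have hSDsub : (↑SD : Set D) ⊆ NSet R A := by
      intro y hy
      simp only [hSD, Finset.coe_image, Set.mem_image, Finset.mem_coe] at hy
      obtain ⟨y', _, rfl⟩ := hy
      exact hNSfin.mem_toFinset.mp y'.2
    have hNSA' : NSet R A' ⊆ NSet R A \ ↑SD := by
      rintro y ⟨q, hqA', hRyq⟩
      have hqA : q ∈ A := (Finset.mem_sdiff.mp hqA').1
      have hqnAS : q ∉ AS := (Finset.mem_sdiff.mp hqA').2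
      refine ⟨⟨q, hqA, hRyq⟩, ?_⟩
      intro hySD
      simp only [hSD, Finset.mem_coe, Finset.mem_image] at hySD
      obtain ⟨y', hy'S, rfl⟩ := hySD
      exact hqnAS (Finset.mem_filter.mpr ⟨hqA, y', hy'S, hRyq⟩)
    have hNSA'sub : NSet R A' ⊆ NSet R A := fun y hy => (hNSA' hy).1
    have hfinA' : (NSet R A').Finite := hNSfin.subset hNSA'sub
    have hViolA' : Viol R E A' := by
      refine ⟨hfinA', fun q hq => hAfin q (Finset.mem_sdiff.mp hq).1, ?_⟩
      have e1 : ∑ q ∈ A', E.count q + ∑ q ∈ AS, E.count q = ∑ q ∈ A, E.count q :=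
        Finset.sum_sdiff hASsub
      have e2 : (NSet R A \ ↑SD).ncard + SD.card = (NSet R A).ncard := by
        rw [← Set.ncard_coe_finset SD]
        exact Set.ncard_diff_add_ncard_of_subset hSDsub hNSfin
      have e3 : (NSet R A').ncard ≤ (NSet R A \ ↑SD).ncard :=
        Set.ncard_le_ncard hNSA' (hNSfin.subset Set.diff_subset)
      omega
    have hge := hmin A' hViolA'
    have hlt : A'.card < A.card := Finset.card_lt_card (Finset.sdiff_ssubset hASsub hASne)
    omega
  obtain ⟨f, hfinj, hft⟩ := (Finset.all_card_le_biUnion_card_iff_exists_injective t').mp hallR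
  set m : Multiset (D × Q) := NF.attach.val.map (fun y : {y // y ∈ NF} => ((y : D), lA.get (f y))) with hm
  set F : Multiset Q := m.map Prod.snd with hF
  have hmfst : m.map Prod.fst = NF.val := by
    rw [hm, Multiset.map_map]
    exact Multiset.attach_map_val NF.val
  have hmR : ∀ p ∈ m, R p.1 p.2 := by
    intro p hp
    obtain ⟨y, hy, rfl⟩ := Multiset.mem_map.mp hp
    exact (Finset.mem_filter.mp (hft y)).2
  have hFsupp : ∀ q ∈ F, q ∈ A := by
    intro q hq
    obtain ⟨p, hp, rfl⟩ := Multiset.mem_map.mp hq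
    obtain ⟨y, hy, rfl⟩ := Multiset.mem_map.mp hp
    exact hlA_mem (f y)
  have hFle : F ≤ E := by
    have hFeq : F = (NF.attach.val.map f).map lA.get := by
      rw [hF, hm, Multiset.map_map, Multiset.map_map]; rfl
    rw [hFeq]
    refine le_trans (nodup_map_get_le lA _ ?_) ?_
    · exact Multiset.Nodup.map hfinj NF.attach.nodup
    · rw [hlA_coe]; exact Multiset.filter_le _ _
  have hcardF : Multiset.card F = NF.card := by
    rw [hF, hm, Multiset.card_map, Multiset.card_map]
    exact Finset.card_attach
  have hsat : ∀ q0 ∈ A, ¬ Mch R (F + {q0}) := by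
    rintro q0 hq0 ⟨m', hnd', hsnd', hR'⟩
    have hfst_le : m'.map Prod.fst ≤ NF.val := by
      rw [Multiset.le_iff_count]
      intro y
      by_cases hy : y ∈ m'.map Prod.fst
      · obtain ⟨p, hp, rfl⟩ := Multiset.mem_map.mp hy
        have hq' : p.2 ∈ F + {q0} := by
          rw [← hsnd']; exact Multiset.mem_map_of_mem _ hp
        have hq'A : p.2 ∈ A := by
          rcases Multiset.mem_add.mp hq' with h | h
          · exact hFsupp _ h
          · rw [Multiset.mem_singleton.mp h]; exact hq0
        have hyNF : p.1 ∈ NF := hNSfin.mem_toFinset.mpr ⟨p.2, hq'A, hR' p hp⟩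
        calc Multiset.count p.1 (m'.map Prod.fst) ≤ 1 :=
              Multiset.nodup_iff_count_le_one.mp hnd' _
          _ = Multiset.count p.1 NF.val := (Multiset.count_eq_one_of_mem NF.nodup hyNF).symm
      · rw [Multiset.count_eq_zero_of_notMem hy]; exact Nat.zero_le _
    have hc1 : Multiset.card m' ≤ NF.card := by
      have h := Multiset.card_le_card hfst_le
      rwa [Multiset.card_map] at h
    have hc2 : Multiset.card m' = Multiset.card F + 1 := by
      rw [← Multiset.card_map Prod.snd m', hsnd']
      simp
    omega
  have hgex : ∃ g ∈ A, F.count g < E.count g := by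
    by_contra hng
    push_neg at hng
    have h1 : ∑ q ∈ A, E.count q ≤ ∑ q ∈ A, F.count q := Finset.sum_le_sum hng
    have h2 : ∑ q ∈ A, F.count q ≤ Multiset.card F := by
      rw [sum_count_eq_card_filter]
      exact Multiset.card_le_card (Multiset.filter_le _ _)
    have h3 : (NSet R A).ncard = NF.card := by
      rw [hNF]; exact Set.ncard_eq_toFinset_card _ hNSfin
    omega
  obtain ⟨g, hgA, hgcount⟩ := hgex
  refine ⟨F, hFle, ⟨m, by rw [hmfst]; exact NF.nodup, rfl, hmR⟩, g, ?_, ?_⟩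
  · rw [← Multiset.count_pos, Multiset.count_sub]; omega
  · intro q hq
    have hqA : q ∈ A := by
      rcases Multiset.mem_add.mp hq with h | h
      · exact hFsupp _ h
      · rw [Multiset.mem_singleton.mp h]; exact hgA
    exact hsat q hqA

end Comb2

attribute [reducible] arrow APTA.withInit

section AutoAux

variable {D Q : Type}

lemma infinite_shift (S : Set ℕ) : {k | k + 1 ∈ S}.Infinite ↔ S.Infinite := by
  constructor
  · intro h
    have himg : ((fun k => k + 1) '' {k | k + 1 ∈ S}).Infinite :=
      h.image (Set.injOn_of_injective (fun a b hab => by omega))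
    refine himg.mono ?_
    rintro y ⟨k, hk, rfl⟩
    exact hk
  · intro h
    have h2 : (S \ {0}).Infinite := h.diff (Set.finite_singleton 0)
    have himg : ((fun n => n - 1) '' (S \ {0})).Infinite :=
      h2.image (by rintro a ⟨_, ha⟩ b ⟨_, hb⟩ hab; simp at ha hb hab; omega)
    refine himg.mono ?_
    rintro k ⟨n, ⟨hn, hn0⟩, rfl⟩
    simp only [Set.mem_singleton_iff] at hn0
    simp only [Set.mem_setOf_eq]
    have : n - 1 + 1 = n := by omega
    rwa [this]

lemma paritySeq_shift {s t : ℕ → ℕ} (h : ∀ k, s (k + 1) = t k) :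
    ParitySeq s ↔ ParitySeq t := by
  unfold ParitySeq
  have hset : {c | {k | s k = c}.Infinite} = {c | {k | t k = c}.Infinite} := by
    ext c
    have h1 : {k | t k = c} = {k | k + 1 ∈ {k | s k = c}} := by
      ext k; simp [h k]
    simp only [Set.mem_setOf_eq]
    rw [h1, infinite_shift]
  rw [hset]

lemma satPBF_mono {ch : Set D} {ν ν' : D → Set Q} (hsub : ∀ d ∈ ch, ν d ⊆ ν' d) :
    ∀ φ : PBF (EUPair Q), SatPBF ch ν φ → SatPBF ch ν' φ := by
  intro φ
  induction φ with
  | tru => exact fun h => h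
  | fls => exact fun h => h
  | atom p =>
    rintro ⟨f, hf, mm, hnd, hmm, hmap, hrest⟩
    exact ⟨f, fun d hd => hsub d hd (hf d hd), mm, hnd, hmm, hmap, hrest⟩
  | and φ ψ ihφ ihψ => rintro ⟨h1, h2⟩; exact ⟨ihφ h1, ihψ h2⟩
  | or φ ψ ihφ ihψ => rintro (h1 | h2); exacts [Or.inl (ihφ h1), Or.inr (ihψ h2)]

lemma satPBF_congr {ch : Set D} {ν ν' : D → Set Q} (heq : ∀ d ∈ ch, ν d = ν' d)
    (φ : PBF (EUPair Q)) (h : SatPBF ch ν φ) : SatPBF ch ν' φ :=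
  satPBF_mono (fun d hd => (heq d hd).le) φ h

lemma satPBF_map_some {ch : Set D} {ν : D → Set Q} :
    ∀ φ : PBF (EUPair Q), SatPBF ch ν φ →
      SatPBF ch (fun d => some '' ν d) (φ.map (EUPair.map some)) := by
  intro φ
  induction φ with
  | tru => exact fun h => h
  | fls => exact fun h => h
  | atom p =>
    rintro ⟨f, hf, mm, hnd, hmm, hmap, hrest⟩
    refine ⟨fun d => some (f d), fun d hd => ⟨f d, hf d hd, rfl⟩, mm, hnd, hmm, ?_, ?_⟩
    · show mm.map (some ∘ f) = (EUPair.map some p).1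
      rw [← Multiset.map_map, hmap]; rfl
    · intro d hd hdm
      exact ⟨f d, hrest d hd hdm, rfl⟩
  | and φ ψ ihφ ihψ => rintro ⟨h1, h2⟩; exact ⟨ihφ h1, ihψ h2⟩
  | or φ ψ ihφ ihψ => rintro (h1 | h2); exacts [Or.inl (ihφ h1), Or.inr (ihψ h2)]

lemma satPBF_unmap_some {ch : Set D} {ν : D → Set (Option Q)} (q₀ : Q) :
    ∀ φ : PBF (EUPair Q), SatPBF ch ν (φ.map (EUPair.map some)) →
      SatPBF ch (fun d => some ⁻¹' ν d) φ := by
  intro φ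
  induction φ with
  | tru => exact fun h => h
  | fls => exact fun h => h
  | atom p =>
    rintro ⟨f, hf, mm, hnd, hmm, hmap, hrest⟩
    have hsome : ∀ d ∈ ch, ∃ q : Q, f d = some q ∧ (d ∈ mm → q ∈ p.1) ∧ (d ∉ mm → q ∈ p.2) := by
      intro d hd
      by_cases hdm : d ∈ mm
      · have : f d ∈ mm.map f := Multiset.mem_map_of_mem f hdm
        rw [hmap] at this
        obtain ⟨q, hq, hfd⟩ := Multiset.mem_map.mp this
        exact ⟨q, hfd.symm, fun _ => hq, fun hc => absurd hdm hc⟩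
      · obtain ⟨q, hq, hfd⟩ := hrest d hd hdm
        exact ⟨q, hfd.symm, fun hc => absurd hc hdm, fun _ => hq⟩
    refine ⟨fun d => (f d).getD q₀, ?_, mm, hnd, hmm, ?_, ?_⟩
    · intro d hd
      obtain ⟨q, hfd, -, -⟩ := hsome d hd
      show some ((f d).getD q₀) ∈ ν d
      rw [hfd]
      exact hfd ▸ hf d hd
    · have : mm.map (fun d => (f d).getD q₀) = (mm.map f).map (fun o => o.getD q₀) := by
        rw [Multiset.map_map]; rfl
      rw [this, hmap]
      show (Multiset.map some p.1).map (fun o => o.getD q₀) = p.1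
      rw [Multiset.map_map]
      exact Multiset.map_id' _ ▸ rfl
    · intro d hd hdm
      obtain ⟨q, hfd, -, hq⟩ := hsome d hd
      show (f d).getD q₀ ∈ p.2
      rw [hfd]
      exact hq hdm
  | and φ ψ ihφ ihψ => rintro ⟨h1, h2⟩; exact ⟨ihφ h1, ihψ h2⟩
  | or φ ψ ihφ ihψ => rintro (h1 | h2); exacts [Or.inl (ihφ h1), Or.inr (ihψ h2)]

end AutoAux

section AutoMain

variable {A D : Type}

/-- the embedding of executions of `M.withInit q` under a root child `(d, some q)`. -/
def emb (d : D) {QQ : Type} (q : QQ) (e : List (D × QQ)) : List (D × Option QQ) :=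
  (d, some q) :: e.map (Prod.map id some)

lemma f2_injective {QQ : Type} : Function.Injective (Prod.map id some : D × QQ → D × Option QQ) := by
  rintro ⟨a, b⟩ ⟨c, d⟩ h
  simp [Prod.map, Prod.ext_iff] at h ⊢
  exact h

lemma stateOf_emb (M : APTA A) (qT : M.Q) (G : Multiset M.Q) (d : D) (q : M.Q)
    (e : List (D × M.Q)) :
    (arrow M qT G).stateOf (emb d q e) = some ((M.withInit q).stateOf e) := by
  rcases List.eq_nil_or_concat e with rfl | ⟨l, p, rfl⟩
  · rfl
  · unfold APTA.stateOf emb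
    simp only [List.concat_eq_append]
    rw [List.map_append, List.map_singleton, ← List.cons_append, List.getLast?_concat,
      List.getLast?_concat]
    rfl

lemma emb_map_fst (d : D) {QQ : Type} (q : QQ) (e : List (D × QQ)) :
    (emb d q e).map Prod.fst = d :: e.map Prod.fst := by
  show d :: (e.map (Prod.map id some)).map Prod.fst = _
  rw [List.map_map]
  rfl

lemma accepts_mch (M : APTA A) (qT : M.Q) (T : STree D A) (G : Multiset M.Q)
    (h : (arrow M qT G).Accepts T) :
    Mch (fun (y : D) (q : M.Q) => AccChild M q T y) G := by
  classical
  obtain ⟨et, ⟨hroot, hpref, hproj, htrans⟩, hbr⟩ := h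
  have h0 : SatEU {d : D | [d] ∈ T.nodes} (fun d => {o : Option M.Q | [(d, o)] ∈ et})
      (G.map some, {some qT}) := htrans [] hroot
  obtain ⟨f, hf, mD, hndD, hmDch, hmap, hrest⟩ := h0
  have hsome : ∀ d ∈ mD, ∃ q : M.Q, f d = some q := by
    intro d hd
    have h1 : f d ∈ mD.map f := Multiset.mem_map_of_mem f hd
    rw [hmap] at h1
    obtain ⟨q, _, hfd⟩ := Multiset.mem_map.mp h1
    exact ⟨q, hfd.symm⟩
  -- sub-execution trees witness acceptance of the children
  have hsub : ∀ (d : D) (q : M.Q), [d] ∈ T.nodes → [(d, some q)] ∈ et → AccChild M q T d := by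
    intro d q hd hmem
    refine ⟨hd, {e | emb d q e ∈ et}, ⟨?_, ?_, ?_, ?_⟩, ?_⟩
    · exact hmem
    · intro e p hep
      have heq : emb d q (e ++ [p]) = emb d q e ++ [(Prod.map id some p : D × Option M.Q)] := by
        exact congrArg _ (List.map_append ..)
      rw [Set.mem_setOf_eq, heq] at hep
      exact hpref _ _ hep
    · intro e he
      have h2 := hproj _ he
      erw [emb_map_fst] at h2
      exact h2
    · intro e he
      have h4 := htrans (emb d q e) he
      have hfst : List.map (Prod.fst : D × (arrow M qT G).Q → D) (emb d q e)
          = d :: List.map Prod.fst e := emb_map_fst d q e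
      erw [stateOf_emb, hfst] at h4
      have h4' : SatPBF {d' | (d :: e.map Prod.fst) ++ [d'] ∈ T.nodes}
          (fun d' => {o : Option M.Q | emb d q e ++ [(d', o)] ∈ et})
          ((M.δ ((M.withInit q).stateOf e) (T.label (d :: e.map Prod.fst))).map
            (EUPair.map some)) := h4
      have h5 := satPBF_unmap_some qT _ h4'
      refine satPBF_congr (fun d' _ => ?_) _ h5
      ext q''
      simp only [Set.mem_preimage, Set.mem_setOf_eq, emb, List.map_append, List.map_cons,
        List.map_nil, List.cons_append]
      rfl
    · intro b hbpre
      set bb : ℕ → D × Option M.Q :=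
        fun k => Nat.casesOn k (d, some q) (fun k' => Prod.map id some (b k')) with hbb
      have hpre2 : ∀ k, (List.range k).map bb ∈ et := by
        intro k
        cases k with
        | zero => simpa using hroot
        | succ k =>
          have h6 := hbpre k
          have heq : (List.range (k + 1)).map bb = emb d q ((List.range k).map b) := by
            rw [List.range_succ_eq_map, List.map_cons, List.map_map, emb, List.map_map]
            rfl
          rw [heq]
          exact h6
      have h7 := hbr bb hpre2
      have h8 : ∀ k, (fun k => (arrow M qT G).ω (bb k).2) (k + 1)
          = (fun k => (M.withInit q).ω (b k).2) k := fun k => rfl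
      exact (paritySeq_shift h8).mp h7
  refine ⟨mD.map (fun d => (d, (f d).getD qT)), ?_, ?_, ?_⟩
  · rw [Multiset.map_map]
    show (mD.map (fun d => d)).Nodup
    rwa [Multiset.map_id']
  · rw [Multiset.map_map]
    have heq : mD.map (Prod.snd ∘ fun d => (d, (f d).getD qT))
        = (mD.map f).map (fun o => o.getD qT) := by
      rw [Multiset.map_map]; rfl
    rw [heq, hmap, Multiset.map_map]
    show G.map (fun q => q) = G
    rw [Multiset.map_id']
  · intro p hp
    obtain ⟨d, hd, rfl⟩ := Multiset.mem_map.mp hp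
    have hdch : d ∈ {d : D | [d] ∈ T.nodes} := hmDch d hd
    obtain ⟨qq, hfd⟩ := hsome d hd
    have hmem : [(d, some qq)] ∈ et := by
      have h9 := hf d hdch
      rw [hfd] at h9
      exact h9
    show AccChild M ((f d).getD qT) T d
    rw [hfd]
    exact hsub d qq hdch hmem

lemma mch_accepts (M : APTA A) [DecidableEq M.Q] (qT : M.Q)
    (hqT : ∀ (D' : Type) (T' : STree D' A), (M.withInit qT).Accepts T')
    (T : STree D A) (G : Multiset M.Q)
    (hm : Mch (fun (y : D) (q : M.Q) => AccChild M q T y) G) :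
    (arrow M qT G).Accepts T := by
  classical
  obtain ⟨m, hnd, hsnd, hR⟩ := hm
  have huniq : ∀ d (q q' : M.Q), (d, q) ∈ m → (d, q') ∈ m → q = q' := by
    intro d q q' h1 h2
    by_contra hne
    have hcnt : Multiset.count d (m.map Prod.fst) ≤ 1 :=
      Multiset.nodup_iff_count_le_one.mp hnd d
    rw [Multiset.count_map] at hcnt
    have hmem1 : (d, q) ∈ m.filter (fun p => d = p.1) := Multiset.mem_filter.mpr ⟨h1, rfl⟩
    have hmem2 : (d, q') ∈ m.filter (fun p => d = p.1) := Multiset.mem_filter.mpr ⟨h2, rfl⟩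
    have h2card : ({(d, q), (d, q')} : Finset (D × M.Q)).card
        ≤ (m.filter (fun p => d = p.1)).toFinset.card := by
      apply Finset.card_le_card
      intro x hx
      rcases Finset.mem_insert.mp hx with rfl | hx
      · exact Multiset.mem_toFinset.mpr hmem1
      · rw [Finset.mem_singleton.mp hx]; exact Multiset.mem_toFinset.mpr hmem2
    rw [Finset.card_insert_of_notMem (by simp [hne]), Finset.card_singleton] at h2card
    have h3 := le_trans h2card (Multiset.toFinset_card_le _)
    omega
  set σ : D → M.Q := fun d => if h : ∃ q, (d, q) ∈ m then h.choose else qT with hσ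
  have hσ_eq : ∀ d (q : M.Q), (d, q) ∈ m → σ d = q := by
    intro d q hdq
    have hex : ∃ q : M.Q, (d, q) ∈ m := ⟨q, hdq⟩
    rw [hσ]
    simp only [dif_pos hex]
    exact huniq d hex.choose q hex.choose_spec hdq
  have hσ_not : ∀ d, d ∉ m.map Prod.fst → σ d = qT := by
    intro d hd
    rw [hσ]
    have hne : ¬ ∃ q : M.Q, (d, q) ∈ m := by
      rintro ⟨q, hq⟩
      exact hd (Multiset.mem_map.mpr ⟨(d, q), hq, rfl⟩)
    simp [hne]
  have hchild : ∀ (d : D) (hd : [d] ∈ T.nodes),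
      (M.withInit (σ d)).Accepts (T.subAt [d] hd) := by
    intro d hd
    by_cases hdm : ∃ q : M.Q, (d, q) ∈ m
    · obtain ⟨q, hq⟩ := hdm
      rw [hσ_eq d q hq]
      obtain ⟨h', hacc⟩ := hR (d, q) hq
      exact hacc
    · have hd' : d ∉ m.map Prod.fst := by
        intro hc
        obtain ⟨p, hp, rfl⟩ := Multiset.mem_map.mp hc
        exact hdm ⟨p.2, hp⟩
      rw [hσ_not d hd']
      exact hqT D _
  simp only [APTA.Accepts] at hchild
  choose ets hets1 hets2 using hchild
  refine ⟨{e | e = [] ∨ ∃ (d : D) (hd : [d] ∈ T.nodes) (e' : List (D × M.Q)),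
      e' ∈ ets d hd ∧ e = emb d (σ d) e'}, ⟨?_, ?_, ?_, ?_⟩, ?_⟩
  · exact Or.inl rfl
  · -- prefix closed
    intro e p hep
    rcases hep with h | ⟨d, hd, e', he', heq⟩
    · exact absurd h (by simp)
    · rcases e with _ | ⟨p₀, erest⟩
      · exact Or.inl rfl
      · right
        rw [List.cons_append] at heq
        obtain ⟨hp₀, htail⟩ := List.cons_eq_cons.mp heq
        rcases List.eq_nil_or_concat e' with rfl | ⟨l', p', rfl⟩
        · simp at htail
        · rw [List.concat_eq_append, List.map_append, List.map_singleton] at htail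
          obtain ⟨h1, h2⟩ := List.append_inj' htail rfl
          refine ⟨d, hd, l', ?_, ?_⟩
          · refine (hets1 d hd).2.1 l' p' ?_
            rwa [← List.concat_eq_append]
          · rw [show emb d (σ d) l' = (d, some (σ d)) :: l'.map (Prod.map id some) from rfl,
              ← hp₀, ← h1]
  · -- projection
    intro e he
    rcases he with rfl | ⟨d, hd, e', he', rfl⟩
    · simpa using T.root_mem
    · have h2 := (hets1 d hd).2.2.1 e' he'
      have hfst : List.map (Prod.fst : D × (arrow M qT G).Q → D) (emb d (σ d) e')
          = d :: List.map Prod.fst e' := emb_map_fst _ _ _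
      rw [hfst]
      exact h2
  · -- transitions
    intro e he
    rcases he with rfl | ⟨d, hd, e', he', rfl⟩
    · -- root transition
      show SatEU {d : D | [d] ∈ T.nodes} _ (G.map some, {some qT})
      refine ⟨fun d => some (σ d), ?_, m.map Prod.fst, hnd, ?_, ?_, ?_⟩
      · intro d hdch
        exact Or.inr ⟨d, hdch, [], (hets1 d hdch).1, rfl⟩
      · intro d hdm
        obtain ⟨p, hp, rfl⟩ := Multiset.mem_map.mp hdm
        obtain ⟨hnode, -⟩ := hR p hp
        exact hnode
      · rw [Multiset.map_map]
        have e1 : m.map ((fun d => some (σ d)) ∘ Prod.fst) = m.map (fun p => some p.2) :=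
          Multiset.map_congr rfl (fun p hp => by
            show some (σ p.1) = some p.2
            rw [hσ_eq p.1 p.2 hp])
        rw [e1]
        have e2 : m.map (fun p => some p.2) = (m.map Prod.snd).map some := by
          rw [Multiset.map_map]; rfl
        rw [e2, hsnd]
      · intro d hdch hdm
        show some (σ d) ∈ ({some qT} : Set (Option M.Q))
        rw [hσ_not d hdm]
        rfl
    · -- inner transitions
      have h4 := (hets1 d hd).2.2.2 e' he'
      have h5 := satPBF_map_some _ h4
      have hfst : List.map (Prod.fst : D × (arrow M qT G).Q → D) (emb d (σ d) e')
          = d :: List.map Prod.fst e' := emb_map_fst _ _ _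
      rw [stateOf_emb, hfst]
      refine satPBF_congr (fun d' hd' => ?_) _ h5
      ext o
      constructor
      · rintro ⟨q'', hq'', rfl⟩
        refine Or.inr ⟨d, hd, e' ++ [((d', q'') : D × M.Q)], hq'', ?_⟩
        simp [emb, List.map_append]
      · intro ho
        rcases ho with h | ⟨d₂, hd₂, e₂, he₂, heq⟩
        · exfalso
          have hlen := congrArg List.length h
          simp [emb] at hlen
        · have heq' : (d, some (σ d)) ::
              ((e'.map (Prod.map id some) : List (D × Option M.Q)) ++ [((d', o) : D × Option M.Q)])
              = (d₂, some (σ d₂)) :: (e₂.map (Prod.map id some) : List (D × Option M.Q)) := heq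
          obtain ⟨hh, ht⟩ := List.cons_eq_cons.mp heq'
          have hd2d : d₂ = d := ((Prod.ext_iff.mp hh).1).symm
          subst hd2d
          rcases List.eq_nil_or_concat e₂ with rfl | ⟨l₂, p₂, rfl⟩
          · simp at ht
          · rw [List.concat_eq_append, List.map_append, List.map_singleton] at ht
            obtain ⟨h1, h2⟩ := List.append_inj' ht rfl
            have he'' : e' = l₂ := List.map_injective_iff.mpr f2_injective h1
            have hp2 : (d', o) = (p₂.1, some p₂.2) := by
              have := List.cons_eq_cons.mp h2
              rw [this.1]
              rfl
            obtain ⟨hd'p, hop⟩ := Prod.ext_iff.mp hp2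
            have hdp : d' = p₂.1 := hd'p
            have hoo : o = some p₂.2 := hop
            refine ⟨p₂.2, ?_, hoo.symm⟩
            simp only [Set.mem_setOf_eq]
            rw [he'', hdp, ← List.concat_eq_append]
            exact he₂
  · -- branches
    intro b hb
    have hb1 := hb 1
    rw [show (List.range 1).map b = [b 0] by simp [List.range_succ]] at hb1
    rcases hb1 with h | ⟨d, hd, e₀, he₀, heq₀⟩
    · exact absurd h (by simp)
    obtain ⟨hb0, he₀nil⟩ := List.cons_eq_cons.mp heq₀
    set b' : ℕ → D × M.Q := fun k => ((b (k + 1)).1, ((b (k + 1)).2).getD qT) with hb'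
    have hstep : ∀ k, ∃ e₂, e₂ ∈ ets d hd ∧
        (List.range k).map (fun i => b (i + 1)) = e₂.map (Prod.map id some) := by
      intro k
      have hk := hb (k + 1)
      rcases hk with h | ⟨d₂, hd₂, e₂, he₂, heq⟩
      · exact absurd (congrArg List.length h) (by simp)
      rw [List.range_succ_eq_map, List.map_cons, List.map_map] at heq
      obtain ⟨hh, ht⟩ := List.cons_eq_cons.mp heq
      have hd2d : d₂ = d := by
        have h9 := hb0.symm.trans hh
        exact ((Prod.ext_iff.mp h9).1).symm
      subst hd2d
      exact ⟨e₂, he₂, ht⟩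
    have hsome2 : ∀ i, ∃ p : D × M.Q, b (i + 1) = Prod.map id some p := by
      intro i
      obtain ⟨e₂, he₂, heq⟩ := hstep (i + 1)
      have hmem : b (i + 1) ∈ (List.range (i + 1)).map (fun j => b (j + 1)) :=
        List.mem_map.mpr ⟨i, List.mem_range.mpr (Nat.lt_succ_self i), rfl⟩
      rw [heq] at hmem
      obtain ⟨p, -, hp⟩ := List.mem_map.mp hmem
      exact ⟨p, hp.symm⟩
    have hf2b : ∀ i, Prod.map id some (b' i) = b (i + 1) := by
      intro i
      obtain ⟨p, hp⟩ := hsome2 i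
      rw [hb']
      simp only [hp]
      rfl
    have hpre' : ∀ k, (List.range k).map b' ∈ ets d hd := by
      intro k
      obtain ⟨e₂, he₂, heq⟩ := hstep k
      have : (List.range k).map b' = e₂ := by
        apply List.map_injective_iff.mpr (f2_injective (QQ := M.Q))
        rw [List.map_map, ← heq]
        exact List.map_congr_left (fun i _ => hf2b i)
      rwa [this]
    have hpar := hets2 d hd b' hpre'
    have h8 : ∀ k, (fun k => (arrow M qT G).ω (b k).2) (k + 1)
        = (fun k => (M.withInit (σ d)).ω (b' k).2) k := by
      intro k
      show (arrow M qT G).ω (b (k + 1)).2 = _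
      rw [← hf2b k]
      rfl
    exact (paritySeq_shift h8).mpr hpar

end AutoMain
/-- if `T` is not accepted by `A_{▷E}`, then there is a blocking pair
`(F,g)` such that for every minimal accepting execution tree of `A_{▷F}` on `T`
(given by its root-level witness `m`), every successor `y` marked `q⊤` (i.e. not
used by `m`) has its subtree rejected by `A_{g'}` for every `g' ∈ F ⊎ {g}`. -/
theorem stmt9 (A D : Type) (M : APTA A) [DecidableEq M.Q] (qT : M.Q)
    (hqT : ∀ (D' : Type) (T' : STree D' A), (M.withInit qT).Accepts T')
    (T : STree D A) (E : Multiset M.Q)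
    (h : ¬ (arrow M qT E).Accepts T) :
    ∃ F, F ≤ E ∧ ∃ g, g ∈ E - F ∧
      (arrow M qT F).Accepts T ∧ ¬ (arrow M qT (F + {g})).Accepts T ∧
      ∀ m : Multiset (D × M.Q), Witness M T F m →
        ∀ y : D, [y] ∈ T.nodes → y ∉ m.map Prod.fst →
          ∀ g' ∈ F + {g}, ¬ AccChild M g' T y := by
  classical
  have hnm : ¬ Mch (fun (y : D) (q : M.Q) => AccChild M q T y) E :=
    fun hm => h (mch_accepts M qT hqT T E hm)
  obtain ⟨F, hFle, hMchF, g, hgEF, hsat⟩ := comb_main _ hnm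
  refine ⟨F, hFle, g, hgEF, mch_accepts M qT hqT T F hMchF, ?_, ?_⟩
  · intro hacc
    exact hsat g (by simp) (accepts_mch M qT T _ hacc)
  · intro m hw y hy hynot g' hg' hacc
    apply hsat g' hg'
    obtain ⟨hnd, hsnd, hRm⟩ := hw
    refine ⟨(y, g') ::ₘ m, ?_, ?_, ?_⟩
    · rw [Multiset.map_cons]
      exact Multiset.nodup_cons.mpr ⟨hynot, hnd⟩
    · rw [Multiset.map_cons, hsnd, add_comm, Multiset.singleton_add]
    · intro p hp
      rcases Multiset.mem_cons.mp hp with rfl | hpm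
      · exact hacc
      · exact hRm p hpm
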